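/- Let f : ℝ² → ℝ be n times continuously differentiable on a fixed square box B₀, with all partial derivatives of total order ≤ n bounded on B₀. Then the Taylor form of order m₀ has order m₀ convergence: there is a constant C depending only on f and B₀ such that for every square B ⊆ B₀, the Hausdorff distance between f(B) and the Taylor form □f(B) is at most C·w(B)^{m₀}, where w(B) is the width of B. -/

import Mathlib

open Set

/-- Partial derivative with respect to the first variable. -/
noncomputable def pdx (f : ℝ × ℝ → ℝ) : ℝ × ℝ → ℝ :=
  fun p => deriv (fun x => f (x, p.2)) p.1

/-- Partial derivative with respect to the second variable. -/
noncomputable def pdy (f : ℝ × ℝ → ℝ) : ℝ × ℝ → ℝ :=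
  fun p => deriv (fun y => f (p.1, y)) p.2

/-- The mixed partial derivative `∂^{i+j} f / ∂x^i ∂y^j`. -/
noncomputable def partialDeriv2 (f : ℝ × ℝ → ℝ) (i j : ℕ) : ℝ × ℝ → ℝ :=
  pdx^[i] (pdy^[j] f)

section
variable {U : Set (ℝ × ℝ)}

lemma pdx_eq_fderiv {g : ℝ × ℝ → ℝ} {p : ℝ × ℝ} (hg : DifferentiableAt ℝ g p) :
    pdx g p = fderiv ℝ g p (1, 0) := by
  have h1 : HasDerivAt (fun x : ℝ => (x, p.2)) ((1 : ℝ), (0 : ℝ)) p.1 :=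
    (hasDerivAt_id p.1).prodMk (hasDerivAt_const p.1 p.2)
  have h2 : HasDerivAt (fun x : ℝ => g (x, p.2)) (fderiv ℝ g p (1, 0)) p.1 := by
    have := hg.hasFDerivAt.comp_hasDerivAt p.1 (by simpa using h1)
    exact this
  exact h2.deriv

lemma pdy_eq_fderiv {g : ℝ × ℝ → ℝ} {p : ℝ × ℝ} (hg : DifferentiableAt ℝ g p) :
    pdy g p = fderiv ℝ g p (0, 1) := by
  have h1 : HasDerivAt (fun y : ℝ => (p.1, y)) ((0 : ℝ), (1 : ℝ)) p.2 :=
    (hasDerivAt_const p.2 p.1).prodMk (hasDerivAt_id p.2)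
  have h2 : HasDerivAt (fun y : ℝ => g (p.1, y)) (fderiv ℝ g p (0, 1)) p.2 := by
    have := hg.hasFDerivAt.comp_hasDerivAt p.2 (by simpa using h1)
    exact this
  exact h2.deriv

lemma pdx_contDiffOn (hU : IsOpen U) {g : ℝ × ℝ → ℝ} {m : ℕ}
    (hg : ContDiffOn ℝ (m + 1 : ℕ) g U) : ContDiffOn ℝ (m : ℕ) (pdx g) U := by
  have hd : DifferentiableOn ℝ g U := hg.differentiableOn (by simp)
  have h1 : ContDiffOn ℝ (m : ℕ) (fun p => fderiv ℝ g p (1, 0)) U :=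
    (hg.fderiv_of_isOpen hU (by exact_mod_cast le_refl (m + 1 : ℕ))).clm_apply contDiffOn_const
  exact h1.congr fun p hp => pdx_eq_fderiv (hd.differentiableAt (hU.mem_nhds hp))

lemma pdy_contDiffOn (hU : IsOpen U) {g : ℝ × ℝ → ℝ} {m : ℕ}
    (hg : ContDiffOn ℝ (m + 1 : ℕ) g U) : ContDiffOn ℝ (m : ℕ) (pdy g) U := by
  have hd : DifferentiableOn ℝ g U := hg.differentiableOn (by simp)
  have h1 : ContDiffOn ℝ (m : ℕ) (fun p => fderiv ℝ g p (0, 1)) U :=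
    (hg.fderiv_of_isOpen hU (by exact_mod_cast le_refl (m + 1 : ℕ))).clm_apply contDiffOn_const
  exact h1.congr fun p hp => pdy_eq_fderiv (hd.differentiableAt (hU.mem_nhds hp))

lemma pdx_congr (hU : IsOpen U) {g₁ g₂ : ℝ × ℝ → ℝ} (h : ∀ q ∈ U, g₁ q = g₂ q)
    {p : ℝ × ℝ} (hp : p ∈ U) : pdx g₁ p = pdx g₂ p := by
  have hc : Continuous fun x : ℝ => (x, p.2) := continuous_id.prodMk continuous_const
  have hev : ∀ᶠ x in nhds p.1, (x, p.2) ∈ U := by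
    have : (p.1, p.2) ∈ U := by simpa using hp
    exact hc.continuousAt.preimage_mem_nhds (hU.mem_nhds this)
  exact Filter.EventuallyEq.deriv_eq (by filter_upwards [hev] with x hx using h _ hx)

lemma pdy_congr (hU : IsOpen U) {g₁ g₂ : ℝ × ℝ → ℝ} (h : ∀ q ∈ U, g₁ q = g₂ q)
    {p : ℝ × ℝ} (hp : p ∈ U) : pdy g₁ p = pdy g₂ p := by
  have hc : Continuous fun y : ℝ => (p.1, y) := continuous_const.prodMk continuous_id
  have hev : ∀ᶠ y in nhds p.2, (p.1, y) ∈ U := by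
    have : (p.1, p.2) ∈ U := by simpa using hp
    exact hc.continuousAt.preimage_mem_nhds (hU.mem_nhds this)
  exact Filter.EventuallyEq.deriv_eq (by filter_upwards [hev] with y hy using h _ hy)

lemma pdx_iter_congr (hU : IsOpen U) (i : ℕ) : ∀ {g₁ g₂ : ℝ × ℝ → ℝ}, (∀ q ∈ U, g₁ q = g₂ q) →
    ∀ q ∈ U, pdx^[i] g₁ q = pdx^[i] g₂ q := by
  induction i with
  | zero => intro g₁ g₂ h q hq; simpa using h q hq
  | succ i ih =>
    intro g₁ g₂ h q hq
    rw [Function.iterate_succ, Function.comp_apply, Function.comp_apply]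
    exact ih (fun q hq => pdx_congr hU h hq) q hq

lemma iter_pdx_contDiffOn (hU : IsOpen U) (i : ℕ) : ∀ {m : ℕ} {g : ℝ × ℝ → ℝ},
    ContDiffOn ℝ (m + i : ℕ) g U → ContDiffOn ℝ (m : ℕ) (pdx^[i] g) U := by
  induction i with
  | zero => intro m g h; simpa using h
  | succ i ih =>
    intro m g h
    rw [Function.iterate_succ, Function.comp_apply]
    exact ih (pdx_contDiffOn hU (by exact_mod_cast h.of_le (by exact_mod_cast le_of_eq (by ring))))

lemma iter_pdy_contDiffOn (hU : IsOpen U) (j : ℕ) : ∀ {m : ℕ} {g : ℝ × ℝ → ℝ},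
    ContDiffOn ℝ (m + j : ℕ) g U → ContDiffOn ℝ (m : ℕ) (pdy^[j] g) U := by
  induction j with
  | zero => intro m g h; simpa using h
  | succ j ih =>
    intro m g h
    rw [Function.iterate_succ, Function.comp_apply]
    exact ih (pdy_contDiffOn hU (by exact_mod_cast h.of_le (by exact_mod_cast le_of_eq (by ring))))
end

section
variable {U : Set (ℝ × ℝ)}

lemma schwarz (hU : IsOpen U) {g : ℝ × ℝ → ℝ} (hg : ContDiffOn ℝ 2 g U)
    {p : ℝ × ℝ} (hp : p ∈ U) : pdy (pdx g) p = pdx (pdy g) p := by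
  have hd : DifferentiableOn ℝ g U := hg.differentiableOn (by norm_num)
  have hdg : ∀ q ∈ U, HasFDerivAt g (fderiv ℝ g q) q := fun q hq =>
    (hd.differentiableAt (hU.mem_nhds hq)).hasFDerivAt
  have hf' : ContDiffOn ℝ 1 (fderiv ℝ g) U := hg.fderiv_of_isOpen hU (by norm_num)
  set A := fderiv ℝ (fderiv ℝ g) p with hA
  have hdf' : HasFDerivAt (fderiv ℝ g) A p :=
    (((hf'.differentiableOn one_ne_zero).differentiableAt (hU.mem_nhds hp))).hasFDerivAt
  have hsymm : ∀ v w, A v w = A w v := by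
    intro v w
    exact second_derivative_symmetric_of_eventually
      (Filter.eventually_of_mem (hU.mem_nhds hp) hdg) hdf' v w
  -- the function q ↦ fderiv g q v has fderiv A.flip v  (as CLM: w ↦ A w v)
  have key : ∀ v : ℝ × ℝ, HasFDerivAt (fun q => fderiv ℝ g q v)
      ((fderiv ℝ g p).comp (0 : (ℝ × ℝ) →L[ℝ] (ℝ × ℝ)) + A.flip v) p := by
    intro v
    exact hdf'.clm_apply (hasFDerivAt_const v p)
  have hdiffv : ∀ v : ℝ × ℝ, DifferentiableAt ℝ (fun q => fderiv ℝ g q v) p := fun v =>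
    (key v).differentiableAt
  have e1 : pdy (pdx g) p = A (0, 1) (1, 0) := by
    rw [pdy_congr hU (fun q hq => pdx_eq_fderiv (hd.differentiableAt (hU.mem_nhds hq))) hp]
    rw [pdy_eq_fderiv (hdiffv (1, 0)), (key (1, 0)).fderiv]
    simp
  have e2 : pdx (pdy g) p = A (1, 0) (0, 1) := by
    rw [pdx_congr hU (fun q hq => pdy_eq_fderiv (hd.differentiableAt (hU.mem_nhds hq))) hp]
    rw [pdx_eq_fderiv (hdiffv (0, 1)), (key (0, 1)).fderiv]
    simp
  rw [e1, e2, hsymm]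

lemma pdy_iter_pdx (hU : IsOpen U) (i : ℕ) : ∀ {g : ℝ × ℝ → ℝ},
    ContDiffOn ℝ (i + 1 : ℕ) g U → ∀ q ∈ U, pdy (pdx^[i] g) q = pdx^[i] (pdy g) q := by
  induction i with
  | zero => intro g _ q _; rfl
  | succ i ih =>
    intro g hg q hq
    have hg2 : ContDiffOn ℝ 2 g U := hg.of_le (by exact_mod_cast Nat.le_add_left 2 i)
    have hpdxg : ContDiffOn ℝ (i + 1 : ℕ) (pdx g) U := by
      exact pdx_contDiffOn hU (by exact_mod_cast hg)
    rw [Function.iterate_succ, Function.comp_apply]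
    rw [ih hpdxg q hq]
    have := pdx_iter_congr hU i (fun q hq => schwarz hU hg2 hq) q hq
    rw [this]
    rfl
end

section
variable {U : Set (ℝ × ℝ)} {f : ℝ × ℝ → ℝ} {n : ℕ}

lemma partial_contDiffOn (hU : IsOpen U) (hf : ContDiffOn ℝ n f U) {i j m : ℕ}
    (h : m + i + j ≤ n) : ContDiffOn ℝ (m : ℕ) (partialDeriv2 f i j) U := by
  have h1 : ContDiffOn ℝ (m + i + j : ℕ) f U := hf.of_le (by exact_mod_cast h)
  exact iter_pdx_contDiffOn hU i (iter_pdy_contDiffOn hU j h1)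

lemma pdx_partial (i j : ℕ) (q : ℝ × ℝ) :
    pdx (partialDeriv2 f i j) q = partialDeriv2 f (i + 1) j q := by
  unfold partialDeriv2
  rw [Function.iterate_succ', Function.comp_apply]

lemma pdy_partial (hU : IsOpen U) (hf : ContDiffOn ℝ n f U) {i j : ℕ} (h : i + j + 1 ≤ n)
    {q : ℝ × ℝ} (hq : q ∈ U) :
    pdy (partialDeriv2 f i j) q = partialDeriv2 f i (j + 1) q := by
  unfold partialDeriv2
  have hg : ContDiffOn ℝ (i + 1 : ℕ) (pdy^[j] f) U := by
    refine iter_pdy_contDiffOn hU j (hf.of_le ?_)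
    exact_mod_cast (by omega : i + 1 + j ≤ n)
  rw [pdy_iter_pdx hU i hg q hq]
  congr 1
  rw [Function.iterate_succ', Function.comp_apply]

/-- Chain rule along the line `s ↦ (mx + s*v1, my + s*v2)`. -/
lemma line_hasDerivAt (hU : IsOpen U) {g : ℝ × ℝ → ℝ} (hg : ContDiffOn ℝ 1 g U)
    (mx my v1 v2 t : ℝ) (ht : (mx + t * v1, my + t * v2) ∈ U) :
    HasDerivAt (fun s => g (mx + s * v1, my + s * v2))
      (v1 * pdx g (mx + t * v1, my + t * v2) + v2 * pdy g (mx + t * v1, my + t * v2)) t := by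
  set p : ℝ × ℝ := (mx + t * v1, my + t * v2) with hp
  have hd : DifferentiableAt ℝ g p :=
    (hg.differentiableOn one_ne_zero).differentiableAt (hU.mem_nhds ht)
  have hγ : HasDerivAt (fun s : ℝ => ((mx + s * v1 : ℝ), (my + s * v2 : ℝ))) ((v1, v2)) t := by
    have h1 : HasDerivAt (fun s : ℝ => mx + s * v1) v1 t := by
      simpa using ((hasDerivAt_id t).mul_const v1).const_add mx
    have h2 : HasDerivAt (fun s : ℝ => my + s * v2) v2 t := by
      simpa using ((hasDerivAt_id t).mul_const v2).const_add my
    exact h1.prodMk h2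
  have hc := hd.hasFDerivAt.comp_hasDerivAt t hγ
  have hval : fderiv ℝ g p (v1, v2) = v1 * pdx g p + v2 * pdy g p := by
    have hv : ((v1 : ℝ), (v2 : ℝ)) = v1 • ((1 : ℝ), (0 : ℝ)) + v2 • ((0 : ℝ), (1 : ℝ)) := by
      simp [Prod.ext_iff]
    rw [hv, (fderiv ℝ g p).map_add, (fderiv ℝ g p).map_smul, (fderiv ℝ g p).map_smul,
      pdx_eq_fderiv hd, pdy_eq_fderiv hd]
    simp
  rw [hval] at hc
  exact hc
end

/-- Crude 1-D Taylor bound: if `g k` is an `ℕ`-indexed family with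
`(g k)' = g (k+1)` on `[0,1]` and `|g N| ≤ K` there, then
`|g 0 1 - ∑_{k<N} g k 0 / k!| ≤ K`. -/
lemma taylor_aux (g : ℕ → ℝ → ℝ) (N : ℕ) (hN : 1 ≤ N)
    (hderiv : ∀ k < N, ∀ t ∈ Icc (0 : ℝ) 1, HasDerivAt (g k) (g (k + 1) t) t)
    (K : ℝ) (hK : ∀ t ∈ Icc (0 : ℝ) 1, |g N t| ≤ K) :
    |g 0 1 - ∑ k ∈ Finset.range N, g k 0 / k.factorial| ≤ K := by
  set P : ℝ → ℝ := fun t => ∑ k ∈ Finset.range N, g k t * (1 - t) ^ k / k.factorial with hP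
  have hP0 : P 0 = ∑ k ∈ Finset.range N, g k 0 / k.factorial := by
    simp [hP]
  have hP1 : P 1 = g 0 1 := by
    rw [hP]
    obtain ⟨M, rfl⟩ := Nat.exists_eq_succ_of_ne_zero (by omega : N ≠ 0)
    simp only [Nat.succ_eq_add_one]
    rw [Finset.sum_range_succ']
    simp
  have hPderiv : ∀ t ∈ Icc (0 : ℝ) 1,
      HasDerivAt P (g N t * (1 - t) ^ (N - 1) / (N - 1).factorial) t := by
    intro t ht
    have hterm : ∀ k ∈ Finset.range N, HasDerivAt (fun s => g k s * (1 - s) ^ k / k.factorial)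
        (g (k + 1) t * (1 - t) ^ k / k.factorial
          - k * (g k t * (1 - t) ^ (k - 1) / k.factorial)) t := by
      intro k hk
      have h1 : HasDerivAt (fun s : ℝ => (1 - s) ^ k) (-(k * (1 - t) ^ (k - 1))) t := by
        have hbase : HasDerivAt (fun s : ℝ => 1 - s) (-1) t := by
          simpa using (hasDerivAt_id t).const_sub 1
        simpa [mul_comm] using hbase.fun_pow k
      have := ((hderiv k (Finset.mem_range.1 hk) t ht).mul h1).div_const (k.factorial : ℝ)
      exact this.congr_deriv (by ring)
    have hsum := HasDerivAt.fun_sum hterm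
    refine hsum.congr_deriv ?_
    symm
    -- algebraic identity: the sum telescopes
    have hred : ∀ k : ℕ, (k + 1 : ℝ) * (g (k + 1) t * (1 - t) ^ k / (k + 1).factorial)
        = g (k + 1) t * (1 - t) ^ k / k.factorial := by
      intro k
      rw [Nat.factorial_succ]
      push_cast
      field_simp
    obtain ⟨M, rfl⟩ := Nat.exists_eq_succ_of_ne_zero (by omega : N ≠ 0)
    simp only [Nat.succ_eq_add_one, Nat.add_sub_cancel]
    rw [Finset.sum_sub_distrib, Finset.sum_range_succ' (fun k =>
      (k : ℝ) * (g k t * (1 - t) ^ (k - 1) / k.factorial)) M]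
    simp only [Nat.cast_zero, zero_mul, add_zero, Nat.add_sub_cancel]
    rw [Finset.sum_range_succ (fun k => g (k + 1) t * (1 - t) ^ k / k.factorial) M]
    have : ∀ k ∈ Finset.range M, ((k + 1 : ℕ) : ℝ) * (g (k + 1) t * (1 - t) ^ k / (k + 1).factorial)
        = g (k + 1) t * (1 - t) ^ k / k.factorial := by
      intro k _
      have := hred k
      push_cast at this ⊢
      simpa using this
    rw [Finset.sum_congr rfl this]
    ring
  have hbound : ∀ t ∈ Icc (0 : ℝ) 1,
      ‖g N t * (1 - t) ^ (N - 1) / (N - 1).factorial‖ ≤ K := by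
    intro t ht
    have h1 : (0 : ℝ) ≤ 1 - t := by linarith [ht.2]
    have h2 : (1 - t) ≤ 1 := by linarith [ht.1]
    have h3 : (1 - t) ^ (N - 1) ≤ 1 := pow_le_one₀ h1 h2
    have h4 : (0 : ℝ) ≤ (1 - t) ^ (N - 1) := pow_nonneg h1 _
    have h5 : (1 : ℝ) ≤ (N - 1).factorial := by exact_mod_cast Nat.factorial_pos (N - 1)
    have hKnn : 0 ≤ K := le_trans (abs_nonneg _) (hK 0 (by norm_num))
    rw [Real.norm_eq_abs, abs_div, abs_mul, abs_pow, abs_sub_comm]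
    have : |g N t| * |t - 1| ^ (N - 1) ≤ K := by
      calc |g N t| * |t - 1| ^ (N - 1) ≤ K * 1 := by
            apply mul_le_mul (hK t ht) ?_ (pow_nonneg (abs_nonneg _) _) hKnn
            rw [abs_sub_comm, abs_of_nonneg h1]; exact h3
        _ = K := mul_one K
    calc |g N t| * |t - 1| ^ (N - 1) / |((N - 1).factorial : ℝ)| ≤ |g N t| * |t - 1| ^ (N - 1) / 1 := by
          apply div_le_div_of_nonneg_left ?_ ?_ ?_ <;> first | positivity | (rw [abs_of_nonneg (by positivity)]; exact h5)
      _ ≤ K := by simpa using this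
  have := norm_image_sub_le_of_norm_deriv_le_segment'
    (f := P) (f' := fun t => g N t * (1 - t) ^ (N - 1) / (N - 1).factorial)
    (a := 0) (b := 1) (C := K)
    (fun t ht => (hPderiv t ht).hasDerivWithinAt)
    (fun t ht => hbound t (Ico_subset_Icc_self ht)) 1 (by norm_num)
  rw [hP1, hP0] at *
  simpa using this

lemma pascal_sum (v1 v2 : ℝ) (D : ℕ → ℕ → ℝ) (k : ℕ) :
    ∑ j ∈ Finset.range (k + 1), (k.choose j : ℝ) *
        (v1 * (v1 ^ (k - j) * v2 ^ j * D (k - j + 1) j)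
          + v2 * (v1 ^ (k - j) * v2 ^ j * D (k - j) (j + 1)))
      = ∑ j ∈ Finset.range (k + 2), ((k + 1).choose j : ℝ) *
          (v1 ^ (k + 1 - j) * v2 ^ j * D (k + 1 - j) j) := by
  set h : ℕ → ℝ := fun j => v1 ^ (k + 1 - j) * v2 ^ j * D (k + 1 - j) j with hh
  have hL : ∀ j ∈ Finset.range (k + 1), (k.choose j : ℝ) *
        (v1 * (v1 ^ (k - j) * v2 ^ j * D (k - j + 1) j)
          + v2 * (v1 ^ (k - j) * v2 ^ j * D (k - j) (j + 1)))
      = (k.choose j : ℝ) * h j + (k.choose j : ℝ) * h (j + 1) := by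
    intro j hj
    have hjk : j ≤ k := Nat.lt_succ_iff.1 (Finset.mem_range.1 hj)
    have e1 : k - j + 1 = k + 1 - j := by omega
    have e2 : k + 1 - (j + 1) = k - j := by omega
    rw [hh]
    simp only [e2]
    rw [← e1]
    ring
  rw [Finset.sum_congr rfl hL, Finset.sum_add_distrib]
  -- RHS
  rw [Finset.sum_range_succ' (fun j => ((k + 1).choose j : ℝ) * h j) (k + 1)]
  simp only [Nat.choose_succ_succ, Nat.cast_add, Nat.choose_zero_right, Nat.cast_one, one_mul]
  have : ∑ j ∈ Finset.range (k + 1), ((k.choose j : ℝ) + (k.choose (j + 1) : ℝ)) * h (j + 1)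
      = ∑ j ∈ Finset.range (k + 1), (k.choose j : ℝ) * h (j + 1)
        + ∑ j ∈ Finset.range (k + 1), (k.choose (j + 1) : ℝ) * h (j + 1) := by
    rw [← Finset.sum_add_distrib]; exact Finset.sum_congr rfl fun j _ => by ring
  rw [this]
  -- LHS first sum: ∑_{range (k+1)} C(k,j) h j = ∑_{range k} C(k,j+1) h(j+1) + h 0
  have hfirst : ∑ j ∈ Finset.range (k + 1), (k.choose j : ℝ) * h j
      = ∑ j ∈ Finset.range k, (k.choose (j + 1) : ℝ) * h (j + 1) + h 0 := by
    rw [Finset.sum_range_succ' (fun j => (k.choose j : ℝ) * h j) k]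
    simp
  have hsecond : ∑ j ∈ Finset.range (k + 1), (k.choose (j + 1) : ℝ) * h (j + 1)
      = ∑ j ∈ Finset.range k, (k.choose (j + 1) : ℝ) * h (j + 1) := by
    rw [Finset.sum_range_succ]
    simp [Nat.choose_succ_self]
  rw [hfirst, hsecond]
  ring

section
variable {U : Set (ℝ × ℝ)} {f : ℝ × ℝ → ℝ} {n : ℕ}

lemma core_deriv (hU : IsOpen U) (hf : ContDiffOn ℝ n f U) (mx my v1 v2 : ℝ)
    {k : ℕ} (hk : k < n) {t : ℝ} (ht : (mx + t * v1, my + t * v2) ∈ U) :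
    HasDerivAt (fun s => ∑ j ∈ Finset.range (k + 1), (k.choose j : ℝ) *
        (v1 ^ (k - j) * v2 ^ j * partialDeriv2 f (k - j) j (mx + s * v1, my + s * v2)))
      (∑ j ∈ Finset.range (k + 2), ((k + 1).choose j : ℝ) *
        (v1 ^ (k + 1 - j) * v2 ^ j * partialDeriv2 f (k + 1 - j) j (mx + t * v1, my + t * v2)))
      t := by
  set p : ℝ × ℝ := (mx + t * v1, my + t * v2) with hp
  have hterm : ∀ j ∈ Finset.range (k + 1), HasDerivAt
      (fun s => (k.choose j : ℝ) *
        (v1 ^ (k - j) * v2 ^ j * partialDeriv2 f (k - j) j (mx + s * v1, my + s * v2)))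
      ((k.choose j : ℝ) *
        (v1 * (v1 ^ (k - j) * v2 ^ j * partialDeriv2 f (k - j + 1) j p)
          + v2 * (v1 ^ (k - j) * v2 ^ j * partialDeriv2 f (k - j) (j + 1) p))) t := by
    intro j hj
    have hjk : j ≤ k := Nat.lt_succ_iff.1 (Finset.mem_range.1 hj)
    have hsm : ContDiffOn ℝ ((1 : ℕ) : ℕ∞) (partialDeriv2 f (k - j) j) U :=
      partial_contDiffOn hU hf (by omega)
    have hld := line_hasDerivAt hU (by exact_mod_cast hsm) mx my v1 v2 t ht
    have hpdx : pdx (partialDeriv2 f (k - j) j) p = partialDeriv2 f (k - j + 1) j p :=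
      pdx_partial _ _ _
    have hpdy : pdy (partialDeriv2 f (k - j) j) p = partialDeriv2 f (k - j) (j + 1) p :=
      pdy_partial hU hf (by omega) ht
    rw [hpdx, hpdy] at hld
    have this1 := hld.const_mul ((k.choose j : ℝ) * (v1 ^ (k - j) * v2 ^ j))
    have hfun : (fun s => ((k.choose j : ℝ) * (v1 ^ (k - j) * v2 ^ j)) *
          partialDeriv2 f (k - j) j (mx + s * v1, my + s * v2))
        = fun s => (k.choose j : ℝ) *
          (v1 ^ (k - j) * v2 ^ j * partialDeriv2 f (k - j) j (mx + s * v1, my + s * v2)) := by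
      funext s; ring
    rw [hfun] at this1
    exact this1.congr_deriv (by ring)
  have hsum := HasDerivAt.fun_sum hterm
  rw [← pascal_sum v1 v2 (fun i j => partialDeriv2 f i j p) k]
  exact hsum
end

section
variable {U : Set (ℝ × ℝ)} {f : ℝ × ℝ → ℝ} {n : ℕ}

lemma pointwise_bound (hU : IsOpen U) (hf : ContDiffOn ℝ n f U) {m₀ : ℕ}
    (hm₀ : 1 ≤ m₀) (hm₀n : m₀ ≤ n) (mx my r : ℝ) (hr : 0 ≤ r)
    (hsub : Icc ((mx - r, my - r) : ℝ × ℝ) (mx + r, my + r) ⊆ U)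
    (Mb : ℕ → ℕ → ℝ)
    (hMb : ∀ j ≤ m₀, ∀ p ∈ Icc ((mx - r, my - r) : ℝ × ℝ) (mx + r, my + r),
      |partialDeriv2 f (m₀ - j) j p| ≤ Mb (m₀ - j) j)
    (q : ℝ × ℝ) (hq : q ∈ Icc ((mx - r, my - r) : ℝ × ℝ) (mx + r, my + r)) :
    |f q - ∑ k ∈ Finset.range m₀, (1 / (k.factorial : ℝ)) *
        ∑ j ∈ Finset.range (k + 1), (k.choose j : ℝ) *
          (q.1 - mx) ^ (k - j) * (q.2 - my) ^ j * partialDeriv2 f (k - j) j (mx, my)|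
      ≤ (∑ j ∈ Finset.range (m₀ + 1), (m₀.choose j : ℝ) * Mb (m₀ - j) j) * r ^ m₀ := by
  set v1 : ℝ := q.1 - mx with hv1
  set v2 : ℝ := q.2 - my with hv2
  have h11 : mx - r ≤ q.1 := hq.1.1
  have h12 : my - r ≤ q.2 := hq.1.2
  have h21 : q.1 ≤ mx + r := hq.2.1
  have h22 : q.2 ≤ my + r := hq.2.2
  have hq1 : |v1| ≤ r := by
    rw [hv1, abs_le]; constructor <;> linarith
  have hq2 : |v2| ≤ r := by
    rw [hv2, abs_le]; constructor <;> linarith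
  have hline : ∀ t ∈ Icc (0 : ℝ) 1,
      (mx + t * v1, my + t * v2) ∈ Icc ((mx - r, my - r) : ℝ × ℝ) (mx + r, my + r) := by
    intro t ht
    have h1 : |t * v1| ≤ r := by
      rw [abs_mul, abs_of_nonneg ht.1]
      calc t * |v1| ≤ 1 * r := by
            apply mul_le_mul ht.2 hq1 (abs_nonneg _) zero_le_one
        _ = r := one_mul r
    have h2 : |t * v2| ≤ r := by
      rw [abs_mul, abs_of_nonneg ht.1]
      calc t * |v2| ≤ 1 * r := by
            apply mul_le_mul ht.2 hq2 (abs_nonneg _) zero_le_one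
        _ = r := one_mul r
    rw [abs_le] at h1 h2
    simp only [Set.mem_Icc, Prod.mk_le_mk]
    refine ⟨⟨?_, ?_⟩, ?_, ?_⟩ <;> linarith [h1.1, h1.2, h2.1, h2.2]
  have hlineU : ∀ t ∈ Icc (0 : ℝ) 1, (mx + t * v1, my + t * v2) ∈ U :=
    fun t ht => hsub (hline t ht)
  set g : ℕ → ℝ → ℝ := fun k t => ∑ j ∈ Finset.range (k + 1), (k.choose j : ℝ) *
    (v1 ^ (k - j) * v2 ^ j * partialDeriv2 f (k - j) j (mx + t * v1, my + t * v2)) with hg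
  have hderiv : ∀ k < m₀, ∀ t ∈ Icc (0 : ℝ) 1, HasDerivAt (g k) (g (k + 1) t) t := by
    intro k hk t ht
    exact core_deriv hU hf mx my v1 v2 (lt_of_lt_of_le hk hm₀n) (hlineU t ht)
  set K : ℝ := (∑ j ∈ Finset.range (m₀ + 1), (m₀.choose j : ℝ) * Mb (m₀ - j) j) * r ^ m₀ with hKdef
  have hK : ∀ t ∈ Icc (0 : ℝ) 1, |g m₀ t| ≤ K := by
    intro t ht
    calc |g m₀ t| ≤ ∑ j ∈ Finset.range (m₀ + 1), |(m₀.choose j : ℝ) *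
          (v1 ^ (m₀ - j) * v2 ^ j * partialDeriv2 f (m₀ - j) j (mx + t * v1, my + t * v2))| :=
        Finset.abs_sum_le_sum_abs _ _
      _ ≤ ∑ j ∈ Finset.range (m₀ + 1), (m₀.choose j : ℝ) * Mb (m₀ - j) j * r ^ m₀ := by
        apply Finset.sum_le_sum
        intro j hj
        have hjm : j ≤ m₀ := Nat.lt_succ_iff.1 (Finset.mem_range.1 hj)
        rw [abs_mul, abs_mul, abs_mul, abs_pow, abs_pow]
        have e1 : |v1| ^ (m₀ - j) * |v2| ^ j ≤ r ^ (m₀ - j) * r ^ j := by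
          apply mul_le_mul (pow_le_pow_left₀ (abs_nonneg _) hq1 _)
            (pow_le_pow_left₀ (abs_nonneg _) hq2 _) (by positivity) (by positivity)
        have e2 : r ^ (m₀ - j) * r ^ j = r ^ m₀ := by
          rw [← pow_add]; congr 1; omega
        have e3 : |partialDeriv2 f (m₀ - j) j (mx + t * v1, my + t * v2)| ≤ Mb (m₀ - j) j :=
          hMb j hjm _ (hline t ht)
        have e4 : (0 : ℝ) ≤ Mb (m₀ - j) j := le_trans (abs_nonneg _) e3
        have habs : |(m₀.choose j : ℝ)| = (m₀.choose j : ℝ) := abs_of_nonneg (by positivity)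
        rw [habs]
        calc (m₀.choose j : ℝ) * (|v1| ^ (m₀ - j) * |v2| ^ j * |partialDeriv2 f (m₀ - j) j (mx + t * v1, my + t * v2)|)
            ≤ (m₀.choose j : ℝ) * (r ^ (m₀ - j) * r ^ j * Mb (m₀ - j) j) := by
              apply mul_le_mul_of_nonneg_left ?_ (by positivity)
              apply mul_le_mul e1 e3 (abs_nonneg _) (by positivity)
          _ = (m₀.choose j : ℝ) * Mb (m₀ - j) j * r ^ m₀ := by rw [e2]; ring
      _ = K := by rw [hKdef, Finset.sum_mul]
  have hmain := taylor_aux g m₀ hm₀ hderiv K hK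
  have hg01 : g 0 1 = f q := by
    rw [hg]
    simp only [Finset.range_one, Finset.sum_singleton]
    have hpt : ((mx + 1 * v1 : ℝ), (my + 1 * v2 : ℝ)) = q := by
      rw [hv1, hv2]; simp [Prod.ext_iff]
    rw [hpt]
    have : partialDeriv2 f 0 0 = f := rfl
    simp [this]
  have hgk0 : ∑ k ∈ Finset.range m₀, g k 0 / k.factorial
      = ∑ k ∈ Finset.range m₀, (1 / (k.factorial : ℝ)) *
        ∑ j ∈ Finset.range (k + 1), (k.choose j : ℝ) *
          (q.1 - mx) ^ (k - j) * (q.2 - my) ^ j * partialDeriv2 f (k - j) j (mx, my) := by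
    apply Finset.sum_congr rfl
    intro k _
    simp only [hg, zero_mul, add_zero]
    rw [div_eq_mul_one_div, mul_comm, Finset.mul_sum, Finset.mul_sum]
    apply Finset.sum_congr rfl
    intro j _
    rw [hv1, hv2]; ring
  rw [hg01, hgk0] at hmain
  exact hmain
end

theorem taylor_form_order_m_convergence'
    (f : ℝ × ℝ → ℝ) (n m₀ : ℕ) (hm₀ : 1 ≤ m₀) (hm₀n : m₀ ≤ n)
    (ax ay w0 : ℝ) (hw0 : 0 < w0)
    (U : Set (ℝ × ℝ)) (hU : IsOpen U)
    (hB₀U : Icc (ax, ay) (ax + w0, ay + w0) ⊆ U)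
    (hf : ContDiffOn ℝ n f U)
    (hbdd : ∀ i j : ℕ, i + j ≤ n →
      BddAbove ((fun q => |partialDeriv2 f i j q|) ''
        Icc (ax, ay) (ax + w0, ay + w0))) :
    ∃ C > 0, ∀ mx my r : ℝ, 0 ≤ r →
      Icc (mx - r, my - r) (mx + r, my + r) ⊆ Icc (ax, ay) (ax + w0, ay + w0) →
      let B : Set (ℝ × ℝ) := Icc (mx - r, my - r) (mx + r, my + r)
      let T : ℝ × ℝ → ℝ := fun q =>
        ∑ k ∈ Finset.range m₀, (1 / (k.factorial : ℝ)) *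
          ∑ j ∈ Finset.range (k + 1), (k.choose j : ℝ) *
            (q.1 - mx) ^ (k - j) * (q.2 - my) ^ j *
            partialDeriv2 f (k - j) j (mx, my)
      let S : ℝ :=
        (∑ k ∈ Finset.Ico m₀ n, ((1 / (k.factorial : ℝ)) *
          ∑ j ∈ Finset.range (k + 1), (k.choose j : ℝ) *
            |partialDeriv2 f (k - j) j (mx, my)|) * r ^ (k - m₀)) +
        ((1 / (n.factorial : ℝ)) *
          ∑ j ∈ Finset.range (n + 1), (n.choose j : ℝ) *
            sSup ((fun q => |partialDeriv2 f (n - j) j q|) ''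
              Icc (ax, ay) (ax + w0, ay + w0))) * r ^ (n - m₀)
      max |sInf (f '' B) - (sInf (T '' B) - r ^ m₀ * S)|
          |sSup (f '' B) - (sSup (T '' B) + r ^ m₀ * S)| ≤
        C * (2 * r) ^ m₀ := by
  set B₀ : Set (ℝ × ℝ) := Icc (ax, ay) (ax + w0, ay + w0) with hB₀
  set M : ℕ → ℕ → ℝ := fun i j => sSup ((fun q => |partialDeriv2 f i j q|) '' B₀) with hM
  have hB₀mem : (ax, ay) ∈ B₀ := by
    simp only [hB₀, Set.mem_Icc, Prod.mk_le_mk]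
    refine ⟨⟨le_refl _, le_refl _⟩, ?_, ?_⟩ <;> linarith
  have hMle : ∀ i j, i + j ≤ n → ∀ p ∈ B₀, |partialDeriv2 f i j p| ≤ M i j :=
    fun i j h p hp => le_csSup (hbdd i j h) ⟨p, hp, rfl⟩
  have hMnn : ∀ i j, i + j ≤ n → 0 ≤ M i j := fun i j h =>
    le_trans (abs_nonneg _) (hMle i j h _ hB₀mem)
  set K₀ : ℝ := ∑ j ∈ Finset.range (m₀ + 1), (m₀.choose j : ℝ) * M (m₀ - j) j with hK₀
  have hK₀nn : 0 ≤ K₀ := by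
    apply Finset.sum_nonneg
    intro j hj
    have hjm : j ≤ m₀ := Nat.lt_succ_iff.1 (Finset.mem_range.1 hj)
    have := hMnn (m₀ - j) j (by omega)
    positivity
  set C₃ : ℝ := (∑ k ∈ Finset.Ico m₀ n, ((1 / (k.factorial : ℝ)) *
      ∑ j ∈ Finset.range (k + 1), (k.choose j : ℝ) * M (k - j) j) * (w0 / 2) ^ (k - m₀)) +
    ((1 / (n.factorial : ℝ)) *
      ∑ j ∈ Finset.range (n + 1), (n.choose j : ℝ) * M (n - j) j) * (w0 / 2) ^ (n - m₀)
    with hC₃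
  have hC₃nn : 0 ≤ C₃ := by
    apply add_nonneg
    · apply Finset.sum_nonneg
      intro k hk
      have hkn : k < n := (Finset.mem_Ico.1 hk).2
      have hsn : 0 ≤ ∑ j ∈ Finset.range (k + 1), (k.choose j : ℝ) * M (k - j) j := by
        apply Finset.sum_nonneg
        intro j hj
        have hjk : j ≤ k := Nat.lt_succ_iff.1 (Finset.mem_range.1 hj)
        have := hMnn (k - j) j (by omega)
        positivity
      positivity
    · have hsn : 0 ≤ ∑ j ∈ Finset.range (n + 1), (n.choose j : ℝ) * M (n - j) j := by
        apply Finset.sum_nonneg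
        intro j hj
        have hjn : j ≤ n := Nat.lt_succ_iff.1 (Finset.mem_range.1 hj)
        have := hMnn (n - j) j (by omega)
        positivity
      positivity
  refine ⟨K₀ + C₃ + 1, by linarith, ?_⟩
  intro mx my r hr hsub
  intro B T S
  -- basic membership facts
  have hBne : B.Nonempty := by
    refine ⟨(mx, my), ?_⟩
    simp only [B, Set.mem_Icc, Prod.mk_le_mk]
    refine ⟨⟨?_, ?_⟩, ?_, ?_⟩ <;> linarith
  have hcenter' : ((mx : ℝ), (my : ℝ)) ∈ B₀ := by
    apply hsub
    simp only [B, Set.mem_Icc, Prod.mk_le_mk]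
    refine ⟨⟨?_, ?_⟩, ?_, ?_⟩ <;> linarith
  have hrw : r ≤ w0 / 2 := by
    have hc1 : ((mx - r : ℝ), (my - r : ℝ)) ∈ B := by
      simp only [B, Set.mem_Icc, Prod.mk_le_mk]
      refine ⟨⟨le_refl _, le_refl _⟩, ?_, ?_⟩ <;> linarith
    have hc2 : ((mx + r : ℝ), (my + r : ℝ)) ∈ B := by
      simp only [B, Set.mem_Icc, Prod.mk_le_mk]
      refine ⟨⟨?_, ?_⟩, le_refl _, le_refl _⟩ <;> linarith
    have h1 : ax ≤ mx - r := (hsub hc1).1.1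
    have h2 : mx + r ≤ ax + w0 := (hsub hc2).2.1
    linarith
  set K : ℝ := K₀ * r ^ m₀ with hKdef
  have hKnn : 0 ≤ K := by positivity
  -- pointwise bound
  have hptw : ∀ q ∈ B, |f q - T q| ≤ K := by
    intro q hq
    exact pointwise_bound hU hf hm₀ hm₀n mx my r hr (subset_trans hsub hB₀U) M
      (fun j hj p hp => hMle (m₀ - j) j (by omega) p (hsub hp)) q hq
  -- compactness
  have hBcpt : IsCompact B := isCompact_Icc
  have hfc : ContinuousOn f B := (hf.continuousOn).mono (subset_trans hsub hB₀U)
  have hTc : Continuous T := by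
    apply continuous_finset_sum
    intro k _
    apply Continuous.mul continuous_const
    apply continuous_finset_sum
    intro j _
    apply Continuous.mul
    apply Continuous.mul
    apply Continuous.mul continuous_const
    · exact (continuous_fst.sub continuous_const).pow _
    · exact (continuous_snd.sub continuous_const).pow _
    · exact continuous_const
  have hfB : IsCompact (f '' B) := hBcpt.image_of_continuousOn hfc
  have hTB : IsCompact (T '' B) := hBcpt.image_of_continuousOn hTc.continuousOn
  have hfBne : (f '' B).Nonempty := hBne.image f
  have hTBne : (T '' B).Nonempty := hBne.image T
  -- Hausdorff estimates
  have hinf : |sInf (f '' B) - sInf (T '' B)| ≤ K := by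
    obtain ⟨q1, hq1B, hq1⟩ := hfB.sInf_mem hfBne
    obtain ⟨q2, hq2B, hq2⟩ := hTB.sInf_mem hTBne
    rw [abs_le]
    constructor
    · have h1 : sInf (T '' B) ≤ T q1 := csInf_le hTB.bddBelow ⟨q1, hq1B, rfl⟩
      have h2 := abs_le.1 (hptw q1 hq1B)
      linarith [h2.1, h2.2]
    · have h1 : sInf (f '' B) ≤ f q2 := csInf_le hfB.bddBelow ⟨q2, hq2B, rfl⟩
      have h2 := abs_le.1 (hptw q2 hq2B)
      linarith [h2.1, h2.2]
  have hsup : |sSup (f '' B) - sSup (T '' B)| ≤ K := by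
    obtain ⟨q1, hq1B, hq1⟩ := hfB.sSup_mem hfBne
    obtain ⟨q2, hq2B, hq2⟩ := hTB.sSup_mem hTBne
    rw [abs_le]
    constructor
    · have h1 : f q2 ≤ sSup (f '' B) := le_csSup hfB.bddAbove ⟨q2, hq2B, rfl⟩
      have h2 := abs_le.1 (hptw q2 hq2B)
      linarith [h2.1, h2.2]
    · have h1 : T q1 ≤ sSup (T '' B) := le_csSup hTB.bddAbove ⟨q1, hq1B, rfl⟩
      have h2 := abs_le.1 (hptw q1 hq1B)
      linarith [h2.1, h2.2]
  -- bounds on S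
  have hS0 : 0 ≤ S := by
    apply add_nonneg
    · apply Finset.sum_nonneg
      intro k hk
      have hsn : 0 ≤ ∑ j ∈ Finset.range (k + 1), (k.choose j : ℝ) *
          |partialDeriv2 f (k - j) j (mx, my)| := by
        apply Finset.sum_nonneg; intro j _; positivity
      positivity
    · have hsn : 0 ≤ ∑ j ∈ Finset.range (n + 1), (n.choose j : ℝ) *
          sSup ((fun q => |partialDeriv2 f (n - j) j q|) '' B₀) := by
        apply Finset.sum_nonneg
        intro j hj
        have hjn : j ≤ n := Nat.lt_succ_iff.1 (Finset.mem_range.1 hj)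
        have := hMnn (n - j) j (by omega)
        positivity
      positivity
  have hSC : S ≤ C₃ := by
    rw [hC₃]
    apply add_le_add
    · apply Finset.sum_le_sum
      intro k hk
      have hkn : k < n := (Finset.mem_Ico.1 hk).2
      have ha : 0 ≤ (1 / (k.factorial : ℝ)) * ∑ j ∈ Finset.range (k + 1), (k.choose j : ℝ) *
          |partialDeriv2 f (k - j) j (mx, my)| := by
        have : 0 ≤ ∑ j ∈ Finset.range (k + 1), (k.choose j : ℝ) *
            |partialDeriv2 f (k - j) j (mx, my)| := by
          apply Finset.sum_nonneg; intro j _; positivity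
        positivity
      apply mul_le_mul
      · apply mul_le_mul_of_nonneg_left ?_ (by positivity)
        apply Finset.sum_le_sum
        intro j hj
        have hjk : j ≤ k := Nat.lt_succ_iff.1 (Finset.mem_range.1 hj)
        exact mul_le_mul_of_nonneg_left (hMle (k - j) j (by omega) _ hcenter') (by positivity)
      · exact pow_le_pow_left₀ hr hrw _
      · positivity
      · have hsn : 0 ≤ ∑ j ∈ Finset.range (k + 1), (k.choose j : ℝ) * M (k - j) j := by
          apply Finset.sum_nonneg
          intro j hj
          have hjk : j ≤ k := Nat.lt_succ_iff.1 (Finset.mem_range.1 hj)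
          have := hMnn (k - j) j (by omega)
          positivity
        positivity
    · apply mul_le_mul_of_nonneg_left (pow_le_pow_left₀ hr hrw _)
      have hsn : 0 ≤ ∑ j ∈ Finset.range (n + 1), (n.choose j : ℝ) * M (n - j) j := by
        apply Finset.sum_nonneg
        intro j hj
        have hjn : j ≤ n := Nat.lt_succ_iff.1 (Finset.mem_range.1 hj)
        have := hMnn (n - j) j (by omega)
        positivity
      positivity
  -- final combination
  have hfinal : ∀ a b : ℝ, |a - b| ≤ K → |a - (b - r ^ m₀ * S)| ≤ (K₀ + C₃) * r ^ m₀ ∧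
      |a - (b + r ^ m₀ * S)| ≤ (K₀ + C₃) * r ^ m₀ := by
    intro a b hab
    have hrS : 0 ≤ r ^ m₀ * S := mul_nonneg (pow_nonneg hr _) hS0
    have hrSC : r ^ m₀ * S ≤ C₃ * r ^ m₀ := by
      rw [mul_comm]
      exact mul_le_mul_of_nonneg_right hSC (pow_nonneg hr _)
    have hC3r : 0 ≤ C₃ * r ^ m₀ := mul_nonneg hC₃nn (pow_nonneg hr _)
    have heq : (K₀ + C₃) * r ^ m₀ = K₀ * r ^ m₀ + C₃ * r ^ m₀ := by ring
    have h1 := abs_le.1 hab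
    rw [hKdef] at h1
    constructor <;> (rw [abs_le, heq]; constructor) <;> linarith [h1.1, h1.2]
  have h1 := (hfinal _ _ hinf).1
  have h2 := (hfinal _ _ hsup).2
  have hmax : max |sInf (f '' B) - (sInf (T '' B) - r ^ m₀ * S)|
      |sSup (f '' B) - (sSup (T '' B) + r ^ m₀ * S)| ≤ (K₀ + C₃) * r ^ m₀ :=
    max_le h1 h2
  have hfin2 : (K₀ + C₃) * r ^ m₀ ≤ (K₀ + C₃ + 1) * (2 * r) ^ m₀ := by
    have hpow : r ^ m₀ ≤ (2 * r) ^ m₀ := by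
      apply pow_le_pow_left₀ hr; linarith
    apply mul_le_mul (by linarith) hpow (pow_nonneg hr _) (by linarith)
  exact le_trans hmax hfin2

theorem taylor_form_order_m_convergence
    (f : ℝ × ℝ → ℝ) (n m₀ : ℕ) (hm₀ : 1 ≤ m₀) (hm₀n : m₀ ≤ n)
    (ax ay w0 : ℝ) (hw0 : 0 < w0)
    (U : Set (ℝ × ℝ)) (hU : IsOpen U)
    (hB₀U : Icc (ax, ay) (ax + w0, ay + w0) ⊆ U)
    (hf : ContDiffOn ℝ n f U)
    (hbdd : ∀ i j : ℕ, i + j ≤ n →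
      BddAbove ((fun q => |partialDeriv2 f i j q|) ''
        Icc (ax, ay) (ax + w0, ay + w0))) :
    ∃ C > 0, ∀ mx my r : ℝ, 0 ≤ r →
      Icc (mx - r, my - r) (mx + r, my + r) ⊆ Icc (ax, ay) (ax + w0, ay + w0) →
      let B : Set (ℝ × ℝ) := Icc (mx - r, my - r) (mx + r, my + r)
      let T : ℝ × ℝ → ℝ := fun q =>
        ∑ k ∈ Finset.range m₀, (1 / (k.factorial : ℝ)) *
          ∑ j ∈ Finset.range (k + 1), (k.choose j : ℝ) *
            (q.1 - mx) ^ (k - j) * (q.2 - my) ^ j *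
            partialDeriv2 f (k - j) j (mx, my)
      let S : ℝ :=
        (∑ k ∈ Finset.Ico m₀ n, ((1 / (k.factorial : ℝ)) *
          ∑ j ∈ Finset.range (k + 1), (k.choose j : ℝ) *
            |partialDeriv2 f (k - j) j (mx, my)|) * r ^ (k - m₀)) +
        ((1 / (n.factorial : ℝ)) *
          ∑ j ∈ Finset.range (n + 1), (n.choose j : ℝ) *
            sSup ((fun q => |partialDeriv2 f (n - j) j q|) ''
              Icc (ax, ay) (ax + w0, ay + w0))) * r ^ (n - m₀)
      max |sInf (f '' B) - (sInf (T '' B) - r ^ m₀ * S)|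
          |sSup (f '' B) - (sSup (T '' B) + r ^ m₀ * S)| ≤
        C * (2 * r) ^ m₀ := by
  exact taylor_form_order_m_convergence' f n m₀ hm₀ hm₀n ax ay w0 hw0 U hU hB₀U hf hbdd
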